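/- Let k ≥ 3, let P and Q be finite maximal prefix codes over the two-letter subalphabet {a_0,a_1} of A_k, and let g : P → Q be a bijection. Set P̂ = {a_0} ∪ a_1·P and Q̂ = {a_0} ∪ a_1·Q (finite maximal prefix codes over {a_0,a_1}). Define a map ι(g) on P̂ ∪ spref(P̂)·{a_2,…,a_{k−1}} as follows: ι(g)(a_0) = a_0; ι(g)(a_1 p) = a_1 g(p) for each p ∈ P; and for each u ∈ spref(P̂) and each i with 2 ≤ i ≤ k−1, let u a_1 a_0^m be the unique element of P̂ ∩ u a_1 a_0^* (it has the form a_1 p for a unique p ∈ P), write a_1 g(p) uniquely as v a_1 a_0^{m'}, and set ι(g)(u a_i) = v a_i. Then ι(g) is a well-defined bijection from the finite maximal prefix code P̂ ∪ spref(P̂)·{a_2,…,a_{k−1}} over A_k onto the finite maximal prefix code Q̂ ∪ spref(Q̂)·{a_2,…,a_{k−1}} over A_k; it maps strings over {a_0,a_1} to strings over {a_0,a_1}, and for each i it maps strings of the form x a_i with x ∈ {a_0,a_1}^* to strings of the same form. -/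

import Mathlib

/-- A prefix code over the alphabet `Fin k`: any two prefix-comparable elements are equal. -/
def IsPrefixCode {k : ℕ} (P : Set (List (Fin k))) : Prop :=
  ∀ p ∈ P, ∀ q ∈ P, (p <+: q ∨ q <+: p) → p = q

/-- A maximal prefix code over `Fin k`: a prefix code that is not a proper subset of
another prefix code over `Fin k`. -/
def IsMaximalPrefixCode {k : ℕ} (P : Set (List (Fin k))) : Prop :=
  IsPrefixCode P ∧ ∀ Q : Set (List (Fin k)), IsPrefixCode Q → P ⊆ Q → P = Q

/-- A string over the two-letter subalphabet {a₀,a₁} of `Fin k`. -/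
def Binary {k : ℕ} (w : List (Fin k)) : Prop := ∀ a ∈ w, a.val < 2

/-- A maximal prefix code over the two-letter subalphabet {a₀,a₁} of `Fin k`:
a prefix code all of whose elements are binary, maximal among such prefix codes. -/
def IsMaximalBinaryPrefixCode {k : ℕ} (P : Set (List (Fin k))) : Prop :=
  IsPrefixCode P ∧ (∀ w ∈ P, Binary w) ∧
    ∀ Q : Set (List (Fin k)), IsPrefixCode Q → (∀ w ∈ Q, Binary w) → P ⊆ Q → P = Q

/-- The set of strict prefixes of elements of `P`. -/
def spref {k : ℕ} (P : Set (List (Fin k))) : Set (List (Fin k)) :=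
  {x | ∃ p ∈ P, x <+: p ∧ x ≠ p}

namespace Stmt15Aux

variable {k : ℕ}

def e0 (hk : 3 ≤ k) : Fin k := ⟨0, Nat.lt_of_lt_of_le (Nat.zero_lt_succ 2) hk⟩
def e1 (hk : 3 ≤ k) : Fin k := ⟨1, Nat.lt_of_lt_of_le (Nat.succ_lt_succ (Nat.zero_lt_succ 1)) hk⟩

lemma e0_ne_e1 (hk : 3 ≤ k) : e0 hk ≠ e1 hk := by
  simp [e0, e1, Fin.ext_iff]

def hat (hk : 3 ≤ k) (P : Set (List (Fin k))) : Set (List (Fin k)) :=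
  {[e0 hk]} ∪ {w | ∃ p ∈ P, w = e1 hk :: p}

lemma mem_hat {hk : 3 ≤ k} {P : Set (List (Fin k))} {w : List (Fin k)} :
    w ∈ hat hk P ↔ w = [e0 hk] ∨ ∃ p ∈ P, w = e1 hk :: p := Iff.rfl

lemma binary_of_prefix {w s : List (Fin k)} (hw : Binary w) (hs : s <+: w) : Binary s :=
  fun a ha => hw a (hs.subset ha)

lemma prefix_snoc_cases {s u : List (Fin k)} {a : Fin k} (h : s <+: u ++ [a]) :
    s <+: u ∨ s = u ++ [a] := by
  rcases Nat.lt_or_ge s.length (u ++ [a]).length with hl | hl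
  · left
    refine List.prefix_of_prefix_length_le h (List.prefix_append u [a]) ?_
    simp only [List.length_append, List.length_singleton] at hl
    omega
  · right
    exact h.eq_of_length (le_antisymm h.length_le hl)

lemma rep_rev_unique {a b : Fin k} (hab : a ≠ b) :
    ∀ m m' (s s' : List (Fin k)),
      List.replicate m a ++ b :: s = List.replicate m' a ++ b :: s' → m = m' ∧ s = s' := by
  intro m
  induction m with
  | zero =>
    intro m' s s' h
    cases m' with
    | zero => simpa using h
    | succ n =>
      rw [List.replicate_succ] at h
      simp only [List.replicate_zero, List.nil_append, List.cons_append, List.cons.injEq] at h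
      exact absurd h.1.symm hab
  | succ n ih =>
    intro m' s s' h
    cases m' with
    | zero =>
      rw [List.replicate_succ] at h
      simp only [List.replicate_zero, List.nil_append, List.cons_append, List.cons.injEq] at h
      exact absurd h.1 hab
    | succ n' =>
      rw [List.replicate_succ, List.replicate_succ] at h
      simp only [List.cons_append, List.cons.injEq, true_and] at h
      obtain ⟨hm, hs⟩ := ih n' s s' h
      exact ⟨by omega, hs⟩

lemma snoc_rep_unique {a b : Fin k} (hab : a ≠ b) {u u' : List (Fin k)} {m m' : ℕ}
    (h : u ++ b :: List.replicate m a = u' ++ b :: List.replicate m' a) :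
    u = u' ∧ m = m' := by
  have h' := congrArg List.reverse h
  simp only [List.reverse_append, List.reverse_cons, List.reverse_replicate,
    List.append_assoc, List.singleton_append] at h'
  obtain ⟨hm, hs⟩ := rep_rev_unique hab m m' u.reverse u'.reverse h'
  exact ⟨List.reverse_injective hs, hm⟩

lemma exists_snoc_rep (hk : 3 ≤ k) {w : List (Fin k)} (hw : Binary w)
    (hmem : e1 hk ∈ w) :
    ∃ v m, w = v ++ e1 hk :: List.replicate m (e0 hk) := by
  induction w using List.reverseRecOn with
  | nil => simp at hmem
  | append_singleton ys c ih =>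
    by_cases hc : c = e1 hk
    · exact ⟨ys, 0, by simp [hc]⟩
    · have hys : Binary ys := fun a ha => hw a (by simp [ha])
      have hcm : e1 hk ∈ ys := by
        rcases List.mem_append.1 hmem with h | h
        · exact h
        · simp only [List.mem_singleton] at h
          exact absurd h.symm hc
      obtain ⟨v, m, hvm⟩ := ih hys hcm
      have hc0 : c = e0 hk := by
        have h2 : c.val < 2 := hw c (by simp)
        have h1 : c.val ≠ 1 := fun hh => hc (Fin.ext (by simpa [e1] using hh))
        apply Fin.ext
        simp only [e0]
        omega
      refine ⟨v, m + 1, ?_⟩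
      rw [hvm, hc0, List.replicate_succ']
      simp

lemma binComplete {P : Set (List (Fin k))} (hP : IsMaximalBinaryPrefixCode P)
    {w : List (Fin k)} (hw : Binary w) : ∃ p ∈ P, p <+: w ∨ w <+: p := by
  by_contra hcon
  push_neg at hcon
  have hpc : IsPrefixCode (P ∪ {w}) := by
    intro p hp q hq hpq
    rcases hp with hp | hp <;> rcases hq with hq | hq
    · exact hP.1 p hp q hq hpq
    · simp only [Set.mem_singleton_iff] at hq; subst hq
      exact absurd hpq (by have := hcon p hp; tauto)
    · simp only [Set.mem_singleton_iff] at hp; subst hp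
      exact absurd hpq (by have := hcon q hq; tauto)
    · simp only [Set.mem_singleton_iff] at hp hq; rw [hp, hq]
  have hbin : ∀ x ∈ P ∪ {w}, Binary x := by
    intro x hx
    rcases hx with hx | hx
    · exact hP.2.1 x hx
    · simp only [Set.mem_singleton_iff] at hx; rw [hx]; exact hw
  have := hP.2.2 (P ∪ {w}) hpc hbin Set.subset_union_left
  have hwP : w ∈ P := this ▸ Set.mem_union_right P rfl
  exact (hcon w hwP).1 List.prefix_rfl

lemma finite_prefixes (p : List (Fin k)) : {x : List (Fin k) | x <+: p}.Finite := by
  have hsub : {x : List (Fin k) | x <+: p} ⊆ (fun n => p.take n) '' Set.Iic p.length := by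
    intro x hx
    exact ⟨x.length, by simpa using hx.length_le, (List.prefix_iff_eq_take.1 hx).symm⟩
  exact ((Set.finite_Iic _).image _).subset hsub

lemma spref_finite {S : Set (List (Fin k))} (hS : S.Finite) : (spref S).Finite := by
  have hsub : spref S ⊆ ⋃ p ∈ S, {x | x <+: p} := by
    rintro x ⟨p, hp, hx, _⟩
    exact Set.mem_biUnion hp hx
  exact (hS.biUnion fun p _ => finite_prefixes p).subset hsub

lemma hat_binary {hk : 3 ≤ k} {P : Set (List (Fin k))} (hP2 : ∀ w ∈ P, Binary w) :
    ∀ w ∈ hat hk P, Binary w := by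
  intro w hw
  rcases mem_hat.1 hw with hw | ⟨p, hp, hw⟩
  · subst hw; intro a ha
    simp only [List.mem_singleton] at ha
    subst ha; simp [e0]
  · subst hw; intro a ha
    rcases List.mem_cons.1 ha with ha | ha
    · subst ha; simp [e1]
    · exact hP2 p hp a ha

lemma hat_prefixCode {hk : 3 ≤ k} {P : Set (List (Fin k))} (hP : IsPrefixCode P) :
    IsPrefixCode (hat hk P) := by
  intro p hp q hq hpq
  rcases mem_hat.1 hp with hp' | ⟨x, hx, hp'⟩ <;> rcases mem_hat.1 hq with hq' | ⟨y, hy, hq'⟩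
  · rw [hp', hq']
  · subst hp'; subst hq'
    rcases hpq with hpq | hpq <;>
      exact absurd (List.cons_prefix_cons.1 hpq).1 (by simp [e0, e1, Fin.ext_iff])
  · subst hp'; subst hq'
    rcases hpq with hpq | hpq <;>
      exact absurd (List.cons_prefix_cons.1 hpq).1 (by simp [e0, e1, Fin.ext_iff])
  · subst hp'; subst hq'
    have : x = y := by
      rcases hpq with hpq | hpq
      · exact hP x hx y hy (Or.inl (List.cons_prefix_cons.1 hpq).2)
      · exact hP x hx y hy (Or.inr (List.cons_prefix_cons.1 hpq).2)
    rw [this]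

lemma hat_finite {hk : 3 ≤ k} {P : Set (List (Fin k))} (hPfin : P.Finite) :
    (hat hk P).Finite := by
  have : hat hk P ⊆ insert [e0 hk] ((fun p => e1 hk :: p) '' P) := by
    intro w hw
    rcases mem_hat.1 hw with hw | ⟨p, hp, hw⟩
    · exact Or.inl hw
    · exact Or.inr ⟨p, hp, hw.symm⟩
  exact ((hPfin.image _).insert _).subset this

lemma hat_complete {hk : 3 ≤ k} {P : Set (List (Fin k))}
    (hP : IsMaximalBinaryPrefixCode P) {w : List (Fin k)} (hw : Binary w) :
    ∃ s ∈ hat hk P, s <+: w ∨ w <+: s := by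
  cases w with
  | nil => exact ⟨[e0 hk], Or.inl rfl, Or.inr (List.nil_prefix)⟩
  | cons b t =>
    have hb : b.val < 2 := hw b (List.mem_cons_self)
    by_cases hb0 : b = e0 hk
    · subst hb0
      exact ⟨[e0 hk], Or.inl rfl, Or.inl (List.cons_prefix_cons.2 ⟨rfl, List.nil_prefix⟩)⟩
    · have hb1 : b = e1 hk := by
        apply Fin.ext
        have : b.val ≠ 0 := fun hh => hb0 (Fin.ext (by simpa [e0] using hh))
        simp only [e1]; omega
      subst hb1
      have ht : Binary t := fun a ha => hw a (List.mem_cons_of_mem _ ha)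
      obtain ⟨p, hp, hcomp⟩ := binComplete hP ht
      refine ⟨e1 hk :: p, Or.inr ⟨p, hp, rfl⟩, ?_⟩
      rcases hcomp with hc | hc
      · exact Or.inl (List.cons_prefix_cons.2 ⟨rfl, hc⟩)
      · exact Or.inr (List.cons_prefix_cons.2 ⟨rfl, hc⟩)

lemma prefix_replicate {t : List (Fin k)} {n : ℕ} {a : Fin k}
    (ht : t <+: List.replicate n a) : t = List.replicate t.length a :=
  List.eq_replicate_of_mem fun b hb => List.eq_of_mem_replicate (ht.subset hb)

lemma hat_singleton {hk : 3 ≤ k} {P : Set (List (Fin k))}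
    (hP : IsMaximalBinaryPrefixCode P) (hPfin : P.Finite) :
    ∀ u ∈ spref (hat hk P), ∃ p ∈ P, ∃ m,
      e1 hk :: p = u ++ e1 hk :: List.replicate m (e0 hk) := by
  intro u hu
  obtain ⟨t, ht, hut, hune⟩ := hu
  obtain ⟨L, hL⟩ : ∃ L, ∀ s ∈ hat hk P, s.length ≤ L := by
    obtain ⟨L, hL⟩ := ((hat_finite (hk := hk) hPfin).image List.length).bddAbove
    exact ⟨L, fun s hs => hL (Set.mem_image_of_mem _ hs)⟩
  have hubin : Binary u := binary_of_prefix (hat_binary hP.2.1 t ht) hut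
  set w := u ++ e1 hk :: List.replicate L (e0 hk) with hw
  have hwbin : Binary w := by
    intro a ha
    rcases List.mem_append.1 ha with ha | ha
    · exact hubin a ha
    · rcases List.mem_cons.1 ha with ha | ha
      · subst ha; simp [e1]
      · rw [List.eq_of_mem_replicate ha]; simp [e0]
  obtain ⟨s, hs, hcomp⟩ := hat_complete (hk := hk) hP hwbin
  have hwlen : w.length = u.length + 1 + L := by simp [hw]; omega
  have hsw : s <+: w := by
    rcases hcomp with hc | hc
    · exact hc
    · have := hc.length_le
      have := hL s hs
      omega
  have hslen : u.length < s.length := by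
    by_contra hcon
    push_neg at hcon
    have hsu : s <+: u := List.prefix_of_prefix_length_le hsw (List.prefix_append _ _) hcon
    have hst : s <+: t := hsu.trans hut
    have hult : u.length < t.length := by
      rcases lt_or_eq_of_le hut.length_le with hh | hh
      · exact hh
      · exact absurd (hut.eq_of_length hh) hune
    have := hP.1  -- dummy
    have heq := hat_prefixCode (hk := hk) hP.1 s hs t ht (Or.inl hst)
    have : s.length = t.length := by rw [heq]
    omega
  have hus : u <+: s := List.prefix_of_prefix_length_le (List.prefix_append _ _) hsw (by omega)
  obtain ⟨s', rfl⟩ := hus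
  have hs' : s' <+: e1 hk :: List.replicate L (e0 hk) :=
    (List.prefix_append_right_inj u).1 hsw
  have hs'ne : s' ≠ [] := by
    intro hh
    subst hh
    simp at hslen
  cases s' with
  | nil => exact absurd rfl hs'ne
  | cons b t' =>
    obtain ⟨hb, ht'⟩ := List.cons_prefix_cons.1 hs'
    subst hb
    have ht'' := prefix_replicate ht'
    rcases mem_hat.1 hs with hh | ⟨p, hp, hh⟩
    · exfalso
      cases u with
      | nil =>
        simp only [List.nil_append, List.cons.injEq] at hh
        exact e0_ne_e1 hk hh.1.symm
      | cons b' u' =>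
        have := congrArg List.length hh
        simp at this
    · obtain ⟨m, hm⟩ : ∃ m, t' = List.replicate m (e0 hk) := ⟨_, ht''⟩
      rw [hm] at hh
      exact ⟨p, hp, m, hh.symm⟩


def tee (hk : 3 ≤ k) (P : Set (List (Fin k))) : Set (List (Fin k)) :=
  hat hk P ∪ {w | ∃ u ∈ spref (hat hk P), ∃ a : Fin k, 2 ≤ a.val ∧ w = u ++ [a]}

lemma spref_binary {hk : 3 ≤ k} {P : Set (List (Fin k))} (hP2 : ∀ w ∈ P, Binary w)
    {u : List (Fin k)} (hu : u ∈ spref (hat hk P)) : Binary u := by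
  obtain ⟨t, ht, hut, _⟩ := hu
  exact binary_of_prefix (hat_binary hP2 t ht) hut

lemma tee_finite (hk : 3 ≤ k) {P : Set (List (Fin k))} (hPfin : P.Finite) :
    (tee hk P).Finite := by
  apply Set.Finite.union (hat_finite hPfin)
  have hsub : {w | ∃ u ∈ spref (hat hk P), ∃ a : Fin k, 2 ≤ a.val ∧ w = u ++ [a]} ⊆
      (fun q : List (Fin k) × Fin k => q.1 ++ [q.2]) '' (spref (hat hk P) ×ˢ Set.univ) := by
    rintro w ⟨u, hu, a, ha, rfl⟩
    exact ⟨(u, a), ⟨hu, Set.mem_univ _⟩, rfl⟩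
  exact (((spref_finite (hat_finite hPfin)).prod Set.finite_univ).image _).subset hsub

lemma hat_snoc_incomp {hk : 3 ≤ k} {P : Set (List (Fin k))} (hP : IsMaximalBinaryPrefixCode P)
    {s u : List (Fin k)} {a : Fin k} (hs : s ∈ hat hk P) (hu : u ∈ spref (hat hk P))
    (ha : 2 ≤ a.val) (hcomp : s <+: u ++ [a] ∨ u ++ [a] <+: s) : False := by
  obtain ⟨t, ht, hut, hune⟩ := hu
  have hsbin := hat_binary (hk := hk) hP.2.1 s hs
  rcases hcomp with hc | hc
  · rcases prefix_snoc_cases hc with hc | hc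
    · have hst : s <+: t := hc.trans hut
      have heq := hat_prefixCode (hk := hk) hP.1 s hs t ht (Or.inl hst)
      have h1 : u.length < t.length := by
        rcases lt_or_eq_of_le hut.length_le with hh | hh
        · exact hh
        · exact absurd (hut.eq_of_length hh) hune
      have h2 := hc.length_le
      have h3 := congrArg List.length heq
      omega
    · subst hc
      have := hsbin a (by simp)
      omega
  · have := hsbin a (hc.subset (by simp))
    omega

lemma tee_prefixCode {hk : 3 ≤ k} {P : Set (List (Fin k))}
    (hP : IsMaximalBinaryPrefixCode P) : IsPrefixCode (tee hk P) := by
  rintro p hp q hq hpq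
  rcases hp with hp | ⟨u, hu, a, ha, rfl⟩ <;> rcases hq with hq | ⟨u', hu', a', ha', rfl⟩
  · exact hat_prefixCode (hk := hk) hP.1 p hp q hq hpq
  · exact (hat_snoc_incomp hP hp hu' ha' hpq).elim
  · exact (hat_snoc_incomp hP hq hu ha hpq.symm).elim
  · rcases hpq with hc | hc
    · rcases prefix_snoc_cases hc with hc2 | hc2
      · have := spref_binary hP.2.1 hu' a (hc2.subset (by simp))
        omega
      · exact hc2
    · rcases prefix_snoc_cases hc with hc2 | hc2
      · have := spref_binary hP.2.1 hu a' (hc2.subset (by simp))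
        omega
      · exact hc2.symm

lemma dropWhile_head_false {α : Type*} {p : α → Bool} :
    ∀ (l : List α) (b : α) (rest : List α), l.dropWhile p = b :: rest → p b = false := by
  intro l
  induction l with
  | nil => intro b rest h; simp at h
  | cons a t ih =>
    intro b rest h
    rw [List.dropWhile_cons] at h
    split at h
    · exact ih b rest h
    · next hpa =>
      cases h
      simpa using hpa

lemma tee_complete {hk : 3 ≤ k} {P : Set (List (Fin k))}
    (hP : IsMaximalBinaryPrefixCode P) (w : List (Fin k)) :
    ∃ s ∈ tee hk P, s <+: w ∨ w <+: s := by
  have hsplit : List.takeWhile (fun a : Fin k => decide (a.val < 2)) w ++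
      List.dropWhile (fun a : Fin k => decide (a.val < 2)) w = w := List.takeWhile_append_dropWhile
  have hxbin : Binary (w.takeWhile (fun a : Fin k => decide (a.val < 2))) := by
    intro a ha
    simpa using List.mem_takeWhile_imp ha
  cases hd : w.dropWhile (fun a : Fin k => decide (a.val < 2)) with
  | nil =>
    have hw : Binary w := by
      rw [← hsplit, hd, List.append_nil]
      exact hxbin
    obtain ⟨s, hs, hc⟩ := hat_complete (hk := hk) hP hw
    exact ⟨s, Or.inl hs, hc⟩
  | cons b rest =>
    have hwb : w = w.takeWhile (fun a : Fin k => decide (a.val < 2)) ++ b :: rest := by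
      rw [← hd, hsplit]
    have hb : 2 ≤ b.val := by
      have := dropWhile_head_false w b rest hd
      simp at this
      omega
    obtain ⟨s, hs, hc⟩ := hat_complete (hk := hk) hP hxbin
    rcases hc with hc | hc
    · exact ⟨s, Or.inl hs, Or.inl (hc.trans ⟨b :: rest, hwb.symm⟩)⟩
    · by_cases hxs : w.takeWhile (fun a : Fin k => decide (a.val < 2)) = s
      · exact ⟨s, Or.inl hs, Or.inl (hxs ▸ (⟨b :: rest, hwb.symm⟩ :
          w.takeWhile (fun a : Fin k => decide (a.val < 2)) <+: w))⟩
      · refine ⟨_ ++ [b], Or.inr ⟨_, ⟨s, hs, hc, hxs⟩, b, hb, rfl⟩, Or.inl ?_⟩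
        refine ⟨rest, ?_⟩
        conv_rhs => rw [hwb]
        simp

lemma maximal_of_complete {S : Set (List (Fin k))} (hpc : IsPrefixCode S)
    (hcomp : ∀ w, ∃ s ∈ S, s <+: w ∨ w <+: s) : IsMaximalPrefixCode S := by
  refine ⟨hpc, fun T hT hST => ?_⟩
  apply Set.Subset.antisymm hST
  intro t ht
  obtain ⟨s, hs, hc⟩ := hcomp t
  have := hT s (hST hs) t ht hc
  rwa [← this]

lemma tee_maximal {hk : 3 ≤ k} {P : Set (List (Fin k))}
    (hP : IsMaximalBinaryPrefixCode P) : IsMaximalPrefixCode (tee hk P) :=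
  maximal_of_complete (tee_prefixCode hP) (tee_complete hP)

lemma hat_singleton_unique {P : Set (List (Fin k))} (hk : 3 ≤ k) (hPC : IsPrefixCode P)
    {u p p' : List (Fin k)} {m m' : ℕ} (hp : p ∈ P) (hp' : p' ∈ P)
    (hd1 : e1 hk :: p = u ++ e1 hk :: List.replicate m (e0 hk))
    (hd2 : e1 hk :: p' = u ++ e1 hk :: List.replicate m' (e0 hk)) : p = p' := by
  have hrep : ∀ n n' : ℕ, n ≤ n' →
      List.replicate n (e0 hk) <+: List.replicate n' (e0 hk) := by
    intro n n' hn
    exact ⟨List.replicate (n' - n) (e0 hk), by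
      rw [← List.replicate_add]
      congr 1
      omega⟩
  have hcomp : p <+: p' ∨ p' <+: p := by
    rcases le_total m m' with hm | hm
    · left
      have hpre : (e1 hk :: p) <+: (e1 hk :: p') := by
        rw [hd1, hd2]
        exact (List.prefix_append_right_inj u).2
          (List.cons_prefix_cons.2 ⟨rfl, hrep m m' hm⟩)
      exact (List.cons_prefix_cons.1 hpre).2
    · right
      have hpre : (e1 hk :: p') <+: (e1 hk :: p) := by
        rw [hd1, hd2]
        exact (List.prefix_append_right_inj u).2
          (List.cons_prefix_cons.2 ⟨rfl, hrep m' m hm⟩)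
      exact (List.cons_prefix_cons.1 hpre).2
  exact hPC p hp p' hp' hcomp

lemma spref_of_decomp {hk : 3 ≤ k} {S : Set (List (Fin k))} {w v : List (Fin k)} {m : ℕ}
    (hw : w ∈ S) (hd : w = v ++ e1 hk :: List.replicate m (e0 hk)) : v ∈ spref S := by
  refine ⟨w, hw, ?_, ?_⟩
  · rw [hd]; exact ⟨_, rfl⟩
  · intro hcon
    have hlen := congrArg List.length hd
    rw [← hcon] at hlen
    simp only [List.length_append, List.length_cons, List.length_replicate] at hlen
    omega

end Stmt15Aux

open Stmt15Aux

/-- Well-definedness of the map `ι(g)` of tables. Given a bijection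
`g : P → Q` between finite maximal prefix codes over `{a₀,a₁} ⊂ A_k` (`k ≥ 3`), with
`P̂ = {a₀} ∪ a₁·P`, `Q̂ = {a₀} ∪ a₁·Q`, the map `ι(g)` (fixing `a₀`, sending
`a₁ p ↦ a₁ g(p)`, and `u a_i ↦ v a_i` where `P̂ ∩ u a₁ a₀^* = {a₁ p}` and
`a₁ g(p) = v a₁ a₀^{m'}`) is a bijection from the finite maximal prefix code
`P̂ ∪ spref(P̂)·{a₂,…,a_{k−1}}` onto `Q̂ ∪ spref(Q̂)·{a₂,…,a_{k−1}}`, mapping binary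
strings to binary strings and strings of the form `x a_i` (binary `x`) to strings of
the same form. -/
theorem stmt15 {k : ℕ} (hk : 3 ≤ k)
    (P Q : Set (List (Fin k))) (hPfin : P.Finite) (hQfin : Q.Finite)
    (hP : IsMaximalBinaryPrefixCode P) (hQ : IsMaximalBinaryPrefixCode Q)
    (g : List (Fin k) → List (Fin k)) (hg : Set.BijOn g P Q)
    (Phat Qhat : Set (List (Fin k)))
    (hPhat : Phat = {[(⟨0, by omega⟩ : Fin k)]} ∪
      {w | ∃ p ∈ P, w = (⟨1, by omega⟩ : Fin k) :: p})
    (hQhat : Qhat = {[(⟨0, by omega⟩ : Fin k)]} ∪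
      {w | ∃ x ∈ Q, w = (⟨1, by omega⟩ : Fin k) :: x})
    (h : List (Fin k) → List (Fin k))
    (h0 : h [(⟨0, by omega⟩ : Fin k)] = [(⟨0, by omega⟩ : Fin k)])
    (h1 : ∀ p ∈ P, h ((⟨1, by omega⟩ : Fin k) :: p) = (⟨1, by omega⟩ : Fin k) :: g p)
    (h2 : ∀ u ∈ spref Phat, ∀ a : Fin k, 2 ≤ a.val →
      ∀ p ∈ P, ∀ m : ℕ, ∀ v : List (Fin k), ∀ m' : ℕ,
        (⟨1, by omega⟩ : Fin k) :: p
          = u ++ (⟨1, by omega⟩ : Fin k) :: List.replicate m (⟨0, by omega⟩ : Fin k) →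
        (⟨1, by omega⟩ : Fin k) :: g p
          = v ++ (⟨1, by omega⟩ : Fin k) :: List.replicate m' (⟨0, by omega⟩ : Fin k) →
        h (u ++ [a]) = v ++ [a]) :
    (Phat ∪ {w | ∃ u ∈ spref Phat, ∃ a : Fin k, 2 ≤ a.val ∧ w = u ++ [a]}).Finite ∧
    IsMaximalPrefixCode
      (Phat ∪ {w | ∃ u ∈ spref Phat, ∃ a : Fin k, 2 ≤ a.val ∧ w = u ++ [a]}) ∧
    (Qhat ∪ {w | ∃ u ∈ spref Qhat, ∃ a : Fin k, 2 ≤ a.val ∧ w = u ++ [a]}).Finite ∧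
    IsMaximalPrefixCode
      (Qhat ∪ {w | ∃ u ∈ spref Qhat, ∃ a : Fin k, 2 ≤ a.val ∧ w = u ++ [a]}) ∧
    Set.BijOn h
      (Phat ∪ {w | ∃ u ∈ spref Phat, ∃ a : Fin k, 2 ≤ a.val ∧ w = u ++ [a]})
      (Qhat ∪ {w | ∃ u ∈ spref Qhat, ∃ a : Fin k, 2 ≤ a.val ∧ w = u ++ [a]}) ∧
    (∀ x ∈ Phat ∪ {w | ∃ u ∈ spref Phat, ∃ a : Fin k, 2 ≤ a.val ∧ w = u ++ [a]},
      Binary x → Binary (h x)) ∧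
    (∀ x ∈ Phat ∪ {w | ∃ u ∈ spref Phat, ∃ a : Fin k, 2 ≤ a.val ∧ w = u ++ [a]},
      ∀ a : Fin k, 2 ≤ a.val → ∀ y : List (Fin k), Binary y → x = y ++ [a] →
        ∃ z : List (Fin k), Binary z ∧ h x = z ++ [a]) := by
  subst hPhat
  subst hQhat
  have h0' : h [e0 hk] = [e0 hk] := h0
  have h1' : ∀ p ∈ P, h (e1 hk :: p) = e1 hk :: g p := h1
  have h2' : ∀ u ∈ spref (hat hk P), ∀ a : Fin k, 2 ≤ a.val →
      ∀ p ∈ P, ∀ m : ℕ, ∀ v : List (Fin k), ∀ m' : ℕ,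
        e1 hk :: p = u ++ e1 hk :: List.replicate m (e0 hk) →
        e1 hk :: g p = v ++ e1 hk :: List.replicate m' (e0 hk) →
        h (u ++ [a]) = v ++ [a] := h2
  -- key lemmas
  have key1 : ∀ u ∈ spref (hat hk P), ∃ v ∈ spref (hat hk Q),
      ∃ p ∈ P, ∃ m m', e1 hk :: p = u ++ e1 hk :: List.replicate m (e0 hk) ∧
        e1 hk :: g p = v ++ e1 hk :: List.replicate m' (e0 hk) := by
    intro u hu
    obtain ⟨p, hp, m, hd⟩ := hat_singleton hP hPfin u hu
    have hgp : g p ∈ Q := hg.1 hp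
    have hbin : Binary (e1 hk :: g p) := by
      intro c hc
      rcases List.mem_cons.1 hc with hc | hc
      · subst hc; simp [e1]
      · exact hQ.2.1 _ hgp c hc
    obtain ⟨v, m', hd'⟩ := exists_snoc_rep hk hbin (List.mem_cons_self)
    have hv : v ∈ spref (hat hk Q) :=
      spref_of_decomp (Or.inr ⟨g p, hgp, rfl⟩) hd'
    exact ⟨v, hv, p, hp, m, m', hd, hd'⟩
  have key3 : ∀ (u u' v : List (Fin k)),
      (∃ p ∈ P, ∃ m m', e1 hk :: p = u ++ e1 hk :: List.replicate m (e0 hk) ∧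
        e1 hk :: g p = v ++ e1 hk :: List.replicate m' (e0 hk)) →
      (∃ p ∈ P, ∃ m m', e1 hk :: p = u' ++ e1 hk :: List.replicate m (e0 hk) ∧
        e1 hk :: g p = v ++ e1 hk :: List.replicate m' (e0 hk)) → u = u' := by
    rintro u u' v ⟨p, hp, m, m', hd1, hd1'⟩ ⟨q, hq, n, n', hd2, hd2'⟩
    have hpq : g p = g q :=
      hat_singleton_unique hk hQ.1 (hg.1 hp) (hg.1 hq) hd1' hd2'
    have hpq2 : p = q := hg.2.1 hp hq hpq
    subst hpq2
    exact (snoc_rep_unique (e0_ne_e1 hk) (hd1.symm.trans hd2)).1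
  have key6 : ∀ v ∈ spref (hat hk Q), ∃ u ∈ spref (hat hk P),
      ∃ p ∈ P, ∃ m m', e1 hk :: p = u ++ e1 hk :: List.replicate m (e0 hk) ∧
        e1 hk :: g p = v ++ e1 hk :: List.replicate m' (e0 hk) := by
    intro v hv
    obtain ⟨q, hq, m', hd'⟩ := hat_singleton hQ hQfin v hv
    obtain ⟨p, hp, rfl⟩ := hg.2.2 hq
    have hbin : Binary (e1 hk :: p) := by
      intro c hc
      rcases List.mem_cons.1 hc with hc | hc
      · subst hc; simp [e1]
      · exact hP.2.1 p hp c hc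
    obtain ⟨u, m, hd⟩ := exists_snoc_rep hk hbin (List.mem_cons_self)
    exact ⟨u, spref_of_decomp (Or.inr ⟨p, hp, rfl⟩) hd, p, hp, m, m', hd, hd'⟩
  -- the bijection
  have hmaps : Set.MapsTo h (tee hk P) (tee hk Q) := by
    rintro x (hx | ⟨u, hu, a, ha, rfl⟩)
    · rcases hx with hx | ⟨p, hp, hx⟩
      · simp only [Set.mem_singleton_iff] at hx
        subst hx
        rw [h0']
        exact Or.inl (Or.inl rfl)
      · subst hx
        rw [h1' p hp]
        exact Or.inl (Or.inr ⟨g p, hg.1 hp, rfl⟩)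
    · obtain ⟨v, hv, p, hp, m, m', hd, hd'⟩ := key1 u hu
      rw [h2' u hu a ha p hp m v m' hd hd']
      exact Or.inr ⟨v, hv, a, ha, rfl⟩
  have hbinval : ∀ x ∈ hat hk P, Binary (h x) := by
    intro x hx
    rcases hx with hx | ⟨p, hp, hx⟩
    · simp only [Set.mem_singleton_iff] at hx
      subst hx
      rw [h0']
      intro c hc
      simp only [List.mem_singleton] at hc
      subst hc
      simp [e0]
    · subst hx
      rw [h1' p hp]
      intro c hc
      rcases List.mem_cons.1 hc with hc | hc
      · subst hc; simp [e1]
      · exact hQ.2.1 _ (hg.1 hp) c hc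
  have hinj : Set.InjOn h (tee hk P) := by
    rintro x (hx | ⟨u, hu, a, ha, rfl⟩) y (hy | ⟨u', hu', a', ha', rfl⟩) hxy
    · rcases hx with hx | ⟨p, hp, hx⟩ <;> rcases hy with hy | ⟨q, hq, hy⟩
      · simp only [Set.mem_singleton_iff] at hx hy
        rw [hx, hy]
      · simp only [Set.mem_singleton_iff] at hx
        subst hx; subst hy
        rw [h0', h1' q hq] at hxy
        injection hxy with hxy1 _
        exact absurd hxy1 (e0_ne_e1 hk)
      · simp only [Set.mem_singleton_iff] at hy
        subst hy; subst hx
        rw [h0', h1' p hp] at hxy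
        injection hxy with hxy1 _
        exact absurd hxy1.symm (e0_ne_e1 hk)
      · subst hx; subst hy
        rw [h1' p hp, h1' q hq] at hxy
        injection hxy with _ hgg
        rw [hg.2.1 hp hq hgg]
    · exfalso
      obtain ⟨v, hv, p, hp, m, m', hd, hd'⟩ := key1 u' hu'
      rw [h2' u' hu' a' ha' p hp m v m' hd hd'] at hxy
      have := hbinval x hx a' (by rw [hxy]; simp)
      omega
    · exfalso
      obtain ⟨v, hv, p, hp, m, m', hd, hd'⟩ := key1 u hu
      rw [h2' u hu a ha p hp m v m' hd hd'] at hxy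
      have := hbinval y hy a (by rw [← hxy]; simp)
      omega
    · obtain ⟨v, hv, p, hp, m, m', hd, hd'⟩ := key1 u hu
      obtain ⟨v2, hv2, q, hq, n, n', he, he'⟩ := key1 u' hu'
      rw [h2' u hu a ha p hp m v m' hd hd',
        h2' u' hu' a' ha' q hq n v2 n' he he'] at hxy
      obtain ⟨hvv, haa⟩ := List.append_inj' hxy (by simp)
      have haa' : a = a' := by injection haa
      rw [← hvv] at he'
      have huu : u = u' := key3 u u' v ⟨p, hp, m, m', hd, hd'⟩ ⟨q, hq, n, n', he, he'⟩
      rw [huu, haa']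
  have hsurj : Set.SurjOn h (tee hk P) (tee hk Q) := by
    rintro y (hy | ⟨v, hv, a, ha, rfl⟩)
    · rcases hy with hy | ⟨q, hq, hy⟩
      · simp only [Set.mem_singleton_iff] at hy
        subst hy
        exact ⟨[e0 hk], Or.inl (Or.inl rfl), h0'⟩
      · subst hy
        obtain ⟨p, hp, rfl⟩ := hg.2.2 hq
        exact ⟨e1 hk :: p, Or.inl (Or.inr ⟨p, hp, rfl⟩), h1' p hp⟩
    · obtain ⟨u, hu, p, hp, m, m', hd, hd'⟩ := key6 v hv
      exact ⟨u ++ [a], Or.inr ⟨u, hu, a, ha, rfl⟩, h2' u hu a ha p hp m v m' hd hd'⟩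
  refine ⟨tee_finite hk hPfin, tee_maximal (hk := hk) hP, tee_finite hk hQfin, tee_maximal (hk := hk) hQ,
    ⟨hmaps, hinj, hsurj⟩, ?_, ?_⟩
  · rintro x (hx | ⟨u, hu, a, ha, rfl⟩) hbx
    · exact hbinval x hx
    · exfalso
      have := hbx a (by simp)
      omega
  · rintro x (hx | ⟨u, hu, a', ha', rfl⟩) a ha y hy hxy
    · exfalso
      have hxbin := hat_binary (hk := hk) hP.2.1 x hx
      have := hxbin a (by rw [hxy]; simp)
      omega
    · obtain ⟨rfl, haa⟩ := List.append_inj' hxy (by simp)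
      have ha'a : a' = a := by injection haa
      subst ha'a
      obtain ⟨v, hv, p, hp, m, m', hd, hd'⟩ := key1 u hu
      exact ⟨v, spref_binary hQ.2.1 hv, h2' u hu a' ha' p hp m v m' hd hd'⟩
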